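/- For all integers n, k with 2 ≤ k ≤ n − 1, there exists an n-state binary weakly acyclic automaton A of rank 2 and a synchronizing set S of k states of A such that some word of length (k − 1)(n − k) synchronizes S and every word synchronizing S has length at least (k − 1)(n − k). -/
import Mathlib


/-- The extension of the transition function to words. -/
def deltaStar {Q A : Type*} (δ : Q → A → Q) (q : Q) (w : List A) : Q := w.foldl δ q

/-- A simple cycle: pairwise distinct states `q 0, …, q (k-1)` together with letters
mapping each state of the cycle to the next one (cyclically). -/
def IsSimpleCycle {Q A : Type*} (δ : Q → A → Q) (k : ℕ) (q : Fin k → Q) : Prop :=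
  0 < k ∧ Function.Injective q ∧
    ∃ x : Fin k → A, ∀ i : Fin k, δ (q i) (x i) = q ⟨(i.val + 1) % k, Nat.mod_lt _ i.pos⟩

/-- An automaton is weakly acyclic if all its simple cycles are self-loops. -/
def WeaklyAcyclic {Q A : Type*} (δ : Q → A → Q) : Prop :=
  ∀ (k : ℕ) (q : Fin k → Q), IsSimpleCycle δ k q → k = 1

/-- A sink state is fixed by every letter. -/
def IsSink {Q A : Type*} (δ : Q → A → Q) (q : Q) : Prop := ∀ x : A, δ q x = q

/-- The word `w` synchronizes the set `S` of states. -/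
def SyncsSet {Q A : Type*} (δ : Q → A → Q) (S : Finset Q) (w : List A) : Prop :=
  ∃ q : Q, ∀ s ∈ S, deltaStar δ s w = q

/-- A set of states is synchronizing if some word synchronizes it. -/
def IsSyncSet {Q A : Type*} (δ : Q → A → Q) (S : Finset Q) : Prop :=
  ∃ w : List A, SyncsSet δ S w

/-- The rank of a word with respect to an automaton: the size of the image of the
state set under the word. -/
def wordRank {Q A : Type*} [Fintype Q] [DecidableEq Q] (δ : Q → A → Q) (w : List A) : ℕ :=
  (Finset.univ.image fun q => deltaStar δ q w).card

/-- The rank of an automaton: the minimum rank of a word with respect to it. -/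
noncomputable def autRank {Q A : Type*} [Fintype Q] [DecidableEq Q] (δ : Q → A → Q) : ℕ :=
  sInf {r | ∃ w : List A, wordRank δ w = r}

/-- The rank of a word with respect to a subset of states. -/
def subsetWordRank {Q A : Type*} [DecidableEq Q] (δ : Q → A → Q) (S : Finset Q)
    (w : List A) : ℕ :=
  (S.image fun q => deltaStar δ q w).card

/-- The rank of a subset of states: the minimum rank of a word with respect to it. -/
noncomputable def subsetRank {Q A : Type*} [DecidableEq Q] (δ : Q → A → Q) (S : Finset Q) : ℕ :=
  sInf {r | ∃ w : List A, subsetWordRank δ S w = r}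

/-- `w^j`: the word obtained by `j` concatenations of `w`. -/
def wordPow {A : Type*} (w : List A) (j : ℕ) : List A := (List.replicate j w).flatten

namespace Stmt8Aux

/-- The transition function: gates `0..k-2`, track `k-1..n-2` with sink `n-2`, trap `n-1`.
Letter `false` (`a`) advances the track; letter `true` (`b`) advances the gates and sends
track-interior states to the trap. -/
def dlt (n k : ℕ) (q : Fin n) (x : Bool) : Fin n :=
  match x with
  | false => if h : k - 1 ≤ q.val ∧ q.val + 2 < n then ⟨q.val + 1, by omega⟩ else q
  | true  =>
      if h : q.val + 1 < k ∧ q.val + 1 < n then ⟨q.val + 1, h.2⟩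
      else if h2 : q.val + 2 < n then ⟨n - 1, by omega⟩ else q

variable {n k : ℕ}

theorem dlt_le (n k : ℕ) (q : Fin n) (x : Bool) : q.val ≤ (dlt n k q x).val := by
  have := q.isLt
  cases x <;> simp only [dlt] <;> split_ifs <;> simp <;> omega

theorem deltaStar_cons (q : Fin n) (x : Bool) (w : List Bool) :
    deltaStar (dlt n k) q (x :: w) = deltaStar (dlt n k) (dlt n k q x) w := rfl

theorem deltaStar_append (q : Fin n) (w v : List Bool) :
    deltaStar (dlt n k) q (w ++ v) = deltaStar (dlt n k) (deltaStar (dlt n k) q w) v := by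
  simp [deltaStar, List.foldl_append]

theorem wa (n k : ℕ) : WeaklyAcyclic (dlt n k) := by
  rintro K q ⟨hK, hinj, x, hx⟩
  by_contra hne
  have hK2 : 2 ≤ K := by omega
  have mono : ∀ i : ℕ, (h : i + 1 < K) → (q ⟨i, by omega⟩).val ≤ (q ⟨i + 1, h⟩).val := by
    intro i h
    have hle := dlt_le n k (q ⟨i, by omega⟩) (x ⟨i, by omega⟩)
    rw [hx ⟨i, by omega⟩] at hle
    have hmod : (i + 1) % K = i + 1 := Nat.mod_eq_of_lt h
    simpa [Fin.mk.injEq, hmod] using hle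
  have chain : ∀ j : ℕ, (h : j < K) → ∀ i : ℕ, (hij : i ≤ j) →
      (q ⟨i, by omega⟩).val ≤ (q ⟨j, h⟩).val := by
    intro j
    induction j with
    | zero => intro h i hi; interval_cases i; exact le_refl _
    | succ m ih =>
      intro h i hi
      rcases Nat.lt_or_ge i (m + 1) with hlt | hge
      · exact le_trans (ih (by omega) i (by omega)) (mono m h)
      · have : i = m + 1 := by omega
        subst this; exact le_refl _
  have hwrap : (q ⟨K - 1, by omega⟩).val ≤ (q ⟨0, hK⟩).val := by
    have hle := dlt_le n k (q ⟨K - 1, by omega⟩) (x ⟨K - 1, by omega⟩)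
    rw [hx ⟨K - 1, by omega⟩] at hle
    have hmod : (K - 1 + 1) % K = 0 := by
      have : K - 1 + 1 = K := by omega
      rw [this, Nat.mod_self]
    simpa [hmod] using hle
  have h01 : (q ⟨0, hK⟩).val ≤ (q ⟨1, by omega⟩).val := chain 1 (by omega) 0 (by omega)
  have h1K : (q ⟨1, by omega⟩).val ≤ (q ⟨K - 1, by omega⟩).val :=
    chain (K - 1) (by omega) 1 (by omega)
  have heq : (q ⟨0, hK⟩) = (q ⟨1, by omega⟩) := Fin.val_injective (by omega)
  have := hinj heq
  simp [Fin.mk.injEq] at this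

theorem dlt_a_gate (q : Fin n) (h : q.val < k - 1) : dlt n k q false = q := by
  simp only [dlt]; split_ifs with h1
  · omega
  · rfl

theorem dlt_a_track (q : Fin n) (h1 : k - 1 ≤ q.val) (h2 : q.val + 2 < n) :
    dlt n k q false = ⟨q.val + 1, by omega⟩ := by
  simp only [dlt]; split_ifs with h3
  · rfl
  · omega

theorem dlt_b_gate (q : Fin n) (h1 : q.val + 1 < k) (h2 : q.val + 1 < n) :
    dlt n k q true = ⟨q.val + 1, h2⟩ := by
  simp only [dlt]; split_ifs with h3 h4
  · rfl
  · omega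
  · omega

theorem dlt_b_track (hkn : k + 1 ≤ n) (q : Fin n) (h1 : k - 1 ≤ q.val) (h2 : q.val + 2 < n) :
    dlt n k q true = ⟨n - 1, by omega⟩ := by
  simp only [dlt]; split_ifs <;> first | rfl | omega

theorem dlt_fix (hkn : k + 1 ≤ n) (q : Fin n) (h : n ≤ q.val + 2) (x : Bool) :
    dlt n k q x = q := by
  cases x <;> simp only [dlt] <;> split_ifs <;> first | rfl | omega

theorem deltaStar_fix (hkn : k + 1 ≤ n) (q : Fin n) (h : n ≤ q.val + 2) (w : List Bool) :
    deltaStar (dlt n k) q w = q := by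
  induction w with
  | nil => rfl
  | cons x w ih => rw [deltaStar_cons, dlt_fix hkn q h x]; exact ih

/-- After enough `b`'s, every state lands in `{n-2, n-1}`. -/
theorem breach (hkn : k + 1 ≤ n) :
    ∀ (t : ℕ) (q : Fin n), n ≤ q.val + t + 2 →
      n - 2 ≤ (deltaStar (dlt n k) q (List.replicate t true)).val := by
  intro t
  induction t with
  | zero => intro q h; exact (by omega : n - 2 ≤ q.val)
  | succ t ih =>
    intro q h
    rw [List.replicate_succ, deltaStar_cons]
    by_cases hq : n ≤ q.val + 2
    · rw [dlt_fix hkn q hq]; exact ih q (by omega)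
    · apply ih
      have := q.isLt
      simp only [dlt]; split_ifs <;> simp <;> omega

theorem rank2 (hk2 : 2 ≤ k) (hkn : k + 1 ≤ n) : autRank (dlt n k) = 2 := by
  have hn3 : 3 ≤ n := by omega
  set snk : Fin n := ⟨n - 2, by omega⟩ with hsnk
  set trp : Fin n := ⟨n - 1, by omega⟩ with htrp
  have hne : snk ≠ trp := by simp [hsnk, htrp, Fin.mk.injEq]; omega
  have hlow : ∀ w : List Bool, 2 ≤ wordRank (dlt n k) w := by
    intro w
    have h1 : snk ∈ Finset.univ.image fun q => deltaStar (dlt n k) q w :=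
      Finset.mem_image.mpr ⟨snk, Finset.mem_univ _,
        deltaStar_fix hkn snk (by simp [hsnk]; omega) w⟩
    have h2 : trp ∈ Finset.univ.image fun q => deltaStar (dlt n k) q w :=
      Finset.mem_image.mpr ⟨trp, Finset.mem_univ _,
        deltaStar_fix hkn trp (by simp [htrp]; omega) w⟩
    exact Finset.one_lt_card.mpr ⟨snk, h1, trp, h2, hne⟩
  have hup : wordRank (dlt n k) (List.replicate n true) = 2 := by
    apply le_antisymm
    · calc (Finset.univ.image fun q => deltaStar (dlt n k) q (List.replicate n true)).card
          ≤ ({snk, trp} : Finset (Fin n)).card := by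
            apply Finset.card_le_card
            intro r hr
            rcases Finset.mem_image.mp hr with ⟨q, _, hq⟩
            have hge := breach hkn n q (by omega)
            rw [hq] at hge
            have hlt := r.isLt
            have : r = snk ∨ r = trp := by
              rcases (by omega : r.val = n - 2 ∨ r.val = n - 1) with h | h
              · left; exact Fin.ext h
              · right; exact Fin.ext h
            simpa [Finset.mem_insert, Finset.mem_singleton] using this
        _ = 2 := Finset.card_pair hne
    · exact hlow _
  have hmem : 2 ∈ {r | ∃ w : List Bool, wordRank (dlt n k) w = r} := ⟨_, hup⟩
  refine le_antisymm (Nat.sInf_le hmem) (le_csInf ⟨2, hmem⟩ ?_)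
  rintro r ⟨w, rfl⟩
  exact hlow w

/-- running `t` letters `a` along the track -/
theorem run_a : ∀ (t r : ℕ) (hr : r < n) (h1 : k - 1 ≤ r) (h2 : r + t + 2 ≤ n),
    deltaStar (dlt n k) (⟨r, hr⟩ : Fin n) (List.replicate t false) = ⟨r + t, by omega⟩ := by
  intro t
  induction t with
  | zero => intro r hr _ _; rfl
  | succ t ih =>
    intro r hr h1 h2
    rw [List.replicate_succ, deltaStar_cons,
      dlt_a_track ⟨r, hr⟩ (show k - 1 ≤ r from h1) (show r + 2 < n by omega)]
    rw [ih (r + 1) (by omega) (by omega) (by omega)]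
    exact Fin.ext (by show r + 1 + t = r + (t + 1); omega)

theorem run_a_gate : ∀ (t : ℕ) (q : Fin n) (h : q.val < k - 1),
    deltaStar (dlt n k) q (List.replicate t false) = q := by
  intro t
  induction t with
  | zero => intro q _; rfl
  | succ t ih =>
    intro q hq
    rw [List.replicate_succ, deltaStar_cons, dlt_a_gate q hq]
    exact ih q hq

/-- the basic block -/
def blk (n k : ℕ) : List Bool := true :: List.replicate (n - k - 1) false

theorem blk_length (hkn : k + 1 ≤ n) : (blk n k).length = n - k := by
  simp [blk]; omega

/-- block action on a non-top gate -/
theorem blk_gate (hkn : k + 1 ≤ n) (j : ℕ) (hj : j + 2 < k) :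
    deltaStar (dlt n k) (⟨j, by omega⟩ : Fin n) (blk n k) =
      (⟨j + 1, by omega⟩ : Fin n) := by
  rw [blk, deltaStar_cons,
    dlt_b_gate (⟨j, by omega⟩ : Fin n) (show j + 1 < k by omega) (show j + 1 < n by omega)]
  exact run_a_gate _ _ (show j + 1 < k - 1 by omega)

/-- block action on the top gate: goes to the sink -/
theorem blk_top (hk2 : 2 ≤ k) (hkn : k + 1 ≤ n) :
    deltaStar (dlt n k) (⟨k - 2, by omega⟩ : Fin n) (blk n k) =
      (⟨n - 2, by omega⟩ : Fin n) := by
  rw [blk, deltaStar_cons,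
    dlt_b_gate (⟨k - 2, by omega⟩ : Fin n) (show k - 2 + 1 < k by omega)
      (show k - 2 + 1 < n by omega)]
  rw [run_a (n - k - 1) (k - 2 + 1) (by omega) (by omega) (by omega)]
  exact Fin.ext (by show k - 2 + 1 + (n - k - 1) = n - 2; omega)

theorem wordPow_succ {A : Type*} (w : List A) (i : ℕ) :
    wordPow w (i + 1) = w ++ wordPow w i := by
  simp [wordPow, List.replicate_succ]

theorem upper (hk2 : 2 ≤ k) (hkn : k + 1 ≤ n) :
    ∀ (i j : ℕ) (hj : j < k - 1) (hji : k - 1 ≤ j + i),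
      deltaStar (dlt n k) (⟨j, by omega⟩ : Fin n) (wordPow (blk n k) i) =
        (⟨n - 2, by omega⟩ : Fin n) := by
  intro i
  induction i with
  | zero => intro j hj h; omega
  | succ i ih =>
    intro j hj h
    rw [wordPow_succ, deltaStar_append]
    rcases Nat.lt_or_ge (j + 2) k with hlt | hge
    · rw [blk_gate hkn j hlt]
      exact ih (j + 1) (by omega) (by omega)
    · have hj2 : j = k - 2 := by omega
      have : (⟨j, by omega⟩ : Fin n) = (⟨k - 2, by omega⟩ : Fin n) :=
        Fin.ext (by simpa using hj2)
      rw [this, blk_top hk2 hkn]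
      exact deltaStar_fix hkn _ (show n ≤ n - 2 + 2 by omega) _

theorem wordPow_length {A : Type*} (w : List A) (i : ℕ) :
    (wordPow w i).length = i * w.length := by
  induction i with
  | zero => simp [wordPow]
  | succ i ih => rw [wordPow_succ]; simp [ih]; ring

theorem lower (hk2 : 2 ≤ k) (hkn : k + 1 ≤ n) :
    ∀ (w : List Bool) (i r : ℕ) (hik : i ≤ k - 1) (hr1 : k - 1 ≤ r) (hr2 : r ≤ n - 2)
      (hg : ∀ (j : ℕ) (hj : j < k - 1) (hij : i ≤ j),
        deltaStar (dlt n k) (⟨j, by omega⟩ : Fin n) w = (⟨n - 2, by omega⟩ : Fin n))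
      (ht : deltaStar (dlt n k) (⟨r, by omega⟩ : Fin n) w = (⟨n - 2, by omega⟩ : Fin n)),
      (k - 1 - i) * (n - k) + (n - 2 - r) ≤ w.length := by
  intro w
  induction w with
  | nil =>
    intro i r hik hr1 hr2 hg ht
    have hi : i = k - 1 := by
      by_contra hne
      have hj := hg i (by omega) (le_refl _)
      have := congrArg Fin.val hj
      simp [deltaStar] at this
      omega
    have hrr : r = n - 2 := by
      have := congrArg Fin.val ht
      simpa [deltaStar] using this
    simp [hi, hrr]
  | cons x w ih =>
    intro i r hik hr1 hr2 hg ht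
    cases x with
    | false =>
      have hg' : ∀ (j : ℕ) (hj : j < k - 1) (hij : i ≤ j),
          deltaStar (dlt n k) (⟨j, by omega⟩ : Fin n) w = (⟨n - 2, by omega⟩ : Fin n) := by
        intro j hj hij
        have h := hg j hj hij
        rwa [deltaStar_cons, dlt_a_gate _ (show j < k - 1 from hj)] at h
      rcases Nat.lt_or_ge r (n - 2) with hlt | hge
      · rw [deltaStar_cons,
          dlt_a_track _ (show k - 1 ≤ r from hr1) (show r + 2 < n by omega)] at ht
        have := ih i (r + 1) hik (by omega) (by omega) hg' ht
        simp only [List.length_cons]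
        omega
      · have hrr : r = n - 2 := by omega
        subst hrr
        rw [deltaStar_cons, dlt_fix hkn _ (show n ≤ n - 2 + 2 by omega)] at ht
        have := ih i (n - 2) hik hr1 (le_refl _) hg' ht
        simp only [List.length_cons]
        omega
    | true =>
      have hrr : r = n - 2 := by
        by_contra hne
        have hrn : r + 2 < n := by omega
        have h := ht
        rw [deltaStar_cons, dlt_b_track hkn _ (show k - 1 ≤ r from hr1) hrn,
          deltaStar_fix hkn _ (show n ≤ n - 1 + 2 by omega)] at h
        have := congrArg Fin.val h
        simp at this
        omega
      subst hrr
      rcases Nat.lt_or_ge i (k - 1) with hi | hi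
      · -- gates nonempty: top gate enters the track
        have htop := hg (k - 2) (by omega) (by omega)
        rw [deltaStar_cons, dlt_b_gate _ (show k - 2 + 1 < k by omega)
          (show k - 2 + 1 < n by omega)] at htop
        have heq : (⟨k - 2 + 1, by omega⟩ : Fin n) = (⟨k - 1, by omega⟩ : Fin n) :=
          Fin.ext (by show k - 2 + 1 = k - 1; omega)
        rw [heq] at htop
        have hg' : ∀ (j : ℕ) (hj : j < k - 1) (hij : i + 1 ≤ j),
            deltaStar (dlt n k) (⟨j, by omega⟩ : Fin n) w = (⟨n - 2, by omega⟩ : Fin n) := by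
          intro j hj hij
          have h := hg (j - 1) (by omega) (by omega)
          rw [deltaStar_cons, dlt_b_gate _ (show j - 1 + 1 < k by omega)
            (show j - 1 + 1 < n by omega)] at h
          have heq2 : (⟨j - 1 + 1, by omega⟩ : Fin n) = (⟨j, by omega⟩ : Fin n) :=
            Fin.ext (by show j - 1 + 1 = j; omega)
          rwa [heq2] at h
        have hIH := ih (i + 1) (k - 1) (by omega) (le_refl _) (by omega) hg' htop
        have key : (k - 1 - i) * (n - k) = (k - 1 - (i + 1)) * (n - k) + (n - k) := by
          have h1 : k - 1 - i = (k - 1 - (i + 1)) + 1 := by omega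
          rw [h1, add_mul, one_mul]
        simp only [List.length_cons]
        omega
      · have hi' : i = k - 1 := by omega
        simp [hi']

end Stmt8Aux

/-- For all `2 ≤ k ≤ n - 1` there is an `n`-state binary weakly acyclic automaton of rank 2
with a synchronizing set `S` of `k` states such that some word of length `(k-1)(n-k)`
synchronizes `S` and every word synchronizing `S` has length at least `(k-1)(n-k)`. -/
theorem stmt8 (n k : ℕ) (h2 : 2 ≤ k) (hk : k ≤ n - 1) :
    ∃ (δ : Fin n → Bool → Fin n) (S : Finset (Fin n)),
      WeaklyAcyclic δ ∧ autRank δ = 2 ∧ S.card = k ∧ IsSyncSet δ S ∧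
      (∃ w : List Bool, SyncsSet δ S w ∧ w.length = (k - 1) * (n - k)) ∧
      (∀ w : List Bool, SyncsSet δ S w → (k - 1) * (n - k) ≤ w.length) := by
  have hkn : k + 1 ≤ n := by omega
  have hn3 : 3 ≤ n := by omega
  set δ := Stmt8Aux.dlt n k with hδ
  set snk : Fin n := ⟨n - 2, by omega⟩ with hsnk
  set S : Finset (Fin n) :=
    insert snk (Finset.univ.image fun i : Fin (k - 1) => (⟨i.val, by omega⟩ : Fin n)) with hS
  have hmemS : ∀ s : Fin n, s ∈ S ↔ s = snk ∨ s.val < k - 1 := by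
    intro s
    simp only [hS, Finset.mem_insert, Finset.mem_image, Finset.mem_univ, true_and]
    constructor
    · rintro (h | ⟨i, hi⟩)
      · exact Or.inl h
      · right; rw [← hi]; exact i.isLt
    · rintro (h | h)
      · exact Or.inl h
      · exact Or.inr ⟨⟨s.val, h⟩, Fin.ext rfl⟩
  have hcard : S.card = k := by
    rw [hS, Finset.card_insert_of_notMem, Finset.card_image_of_injective, Finset.card_univ,
      Fintype.card_fin]
    · omega
    · intro a b hab
      have := congrArg Fin.val hab
      simp at this
      exact Fin.ext this
    · intro hmem
      rcases Finset.mem_image.mp hmem with ⟨i, _, hi⟩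
      have := congrArg Fin.val hi
      simp [hsnk] at this
      have := i.isLt
      omega
  -- the synchronizing word
  set w₀ : List Bool := wordPow (Stmt8Aux.blk n k) (k - 1) with hw₀
  have hsync₀ : SyncsSet δ S w₀ := by
    refine ⟨snk, ?_⟩
    intro s hs
    rcases (hmemS s).mp hs with h | h
    · subst h
      exact Stmt8Aux.deltaStar_fix hkn snk (show n ≤ n - 2 + 2 by omega) w₀
    · have : s = (⟨s.val, by omega⟩ : Fin n) := Fin.ext rfl
      rw [this]
      exact Stmt8Aux.upper h2 hkn (k - 1) s.val h (by omega)
  have hlen₀ : w₀.length = (k - 1) * (n - k) := by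
    rw [hw₀, Stmt8Aux.wordPow_length, Stmt8Aux.blk_length hkn]
  refine ⟨δ, S, Stmt8Aux.wa n k, Stmt8Aux.rank2 h2 hkn, hcard, ⟨w₀, hsync₀⟩,
    ⟨w₀, hsync₀, hlen₀⟩, ?_⟩
  intro w hw
  rcases hw with ⟨z, hz⟩
  have hzsnk : z = snk := by
    have := hz snk ((hmemS snk).mpr (Or.inl rfl))
    rw [Stmt8Aux.deltaStar_fix hkn snk (show n ≤ n - 2 + 2 by omega) w] at this
    exact this.symm
  subst hzsnk
  have hg : ∀ (j : ℕ) (hj : j < k - 1) (hij : 0 ≤ j),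
      deltaStar δ (⟨j, by omega⟩ : Fin n) w = (⟨n - 2, by omega⟩ : Fin n) :=
    fun j hj _ => hz ⟨j, by omega⟩ ((hmemS _).mpr (Or.inr hj))
  have ht : deltaStar δ (⟨n - 2, by omega⟩ : Fin n) w = (⟨n - 2, by omega⟩ : Fin n) :=
    Stmt8Aux.deltaStar_fix hkn _ (show n ≤ n - 2 + 2 by omega) w
  have := Stmt8Aux.lower h2 hkn w 0 (n - 2) (by omega) (by omega) (le_refl _) hg ht
  simpa using this
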